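/- Let H = ⟨G, t | t⁻¹ a t = b⟩ be an HNN-extension of a group G, where a, b ∈ G are elements of infinite order that are not proper powers in G. If g₀ ∈ G is not a proper power in G, then the image of g₀ in H is not a proper power in H. -/

import Mathlib

/-- `g` is a proper power: `g = h ^ k` for some `h` and some `k ≥ 2`. -/
def IsProperPower {G : Type*} [Group G] (g : G) : Prop :=
  ∃ (h : G) (k : ℕ), 2 ≤ k ∧ g = h ^ k

set_option linter.unusedSectionVars false

namespace Stmt8Aux

open HNNExtension HNNExtension.NormalWord List

section PP

variable {G : Type*} [Group G]

lemma pp_one : IsProperPower (1 : G) := ⟨1, 2, le_rfl, by simp⟩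

lemma pp_conj {y : G} (g : G) (h : IsProperPower y) : IsProperPower (g * y * g⁻¹) := by
  obtain ⟨h0, k, hk, rfl⟩ := h
  exact ⟨g * h0 * g⁻¹, k, hk, conj_pow.symm⟩

lemma pp_inv {y : G} (h : IsProperPower y) : IsProperPower y⁻¹ := by
  obtain ⟨h0, k, hk, rfl⟩ := h
  exact ⟨h0⁻¹, k, hk, by rw [inv_pow]⟩

lemma pp_pow (x : G) {k : ℕ} (hk : 2 ≤ k) : IsProperPower (x ^ k) := ⟨x, k, hk, rfl⟩

lemma pp_zpow {x : G} {j : ℤ} (hj : 2 ≤ j ∨ j ≤ -2) : IsProperPower (x ^ j) := by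
  rcases hj with hj | hj
  · refine ⟨x, j.toNat, by omega, ?_⟩
    rw [← zpow_natCast]; congr 1; omega
  · refine ⟨x⁻¹, (-j).toNat, by omega, ?_⟩
    rw [inv_pow, ← zpow_natCast, ← zpow_neg]; congr 1; omega

lemma units_cases (u v : ℤˣ) : u = v ∨ u = -v := by
  rcases Int.units_eq_one_or u with rfl | rfl <;> rcases Int.units_eq_one_or v with rfl | rfl <;>
    first
      | exact Or.inl rfl
      | exact Or.inr (by decide)

lemma units_ne_neg (u : ℤˣ) : u ≠ -u := by
  rcases Int.units_eq_one_or u with rfl | rfl <;> decide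

end PP

section HNN

variable {G : Type*} [Group G] {A B : Subgroup G} (φ : A ≃* B)

/-- The chain condition used by `HNNExtension.ReducedWord`. -/
def Cnd (A B : Subgroup G) : (ℤˣ × G) → (ℤˣ × G) → Prop :=
  fun p q => p.2 ∈ toSubgroup A B p.1 → p.1 = q.1

/-- Make a reduced word. -/
def mkW (h : G) (L : List (ℤˣ × G)) (hc : L.IsChain (Cnd A B)) : ReducedWord G A B :=
  ⟨h, L, hc⟩

@[simp] lemma mkW_head (h : G) (L) (hc) : (mkW (A := A) (B := B) h L hc).head = h := rfl
@[simp] lemma mkW_toList (h : G) (L) (hc) : (mkW (A := A) (B := B) h L hc).toList = L := rfl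

lemma chain_of_word (w : ReducedWord G A B) : w.toList.IsChain (Cnd A B) := w.chain

/-- Product of a list of letters. -/
def lact (L : List (ℤˣ × G)) : HNNExtension G A B φ :=
  (L.map fun x => t ^ (x.1 : ℤ) * of x.2).prod

@[simp] lemma lact_nil : lact φ ([] : List (ℤˣ × G)) = 1 := rfl

@[simp] lemma lact_cons (p : ℤˣ × G) (L : List (ℤˣ × G)) :
    lact φ (p :: L) = t ^ (p.1 : ℤ) * of p.2 * lact φ L := by
  simp [lact]

@[simp] lemma lact_append (L₁ L₂ : List (ℤˣ × G)) :
    lact φ (L₁ ++ L₂) = lact φ L₁ * lact φ L₂ := by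
  simp [lact]

lemma prod_eq (w : ReducedWord G A B) : w.prod φ = of w.head * lact φ w.toList := rfl

lemma britton (w : ReducedWord G A B) (hne : w.toList ≠ []) (x : G) :
    w.prod φ ≠ of x := fun h =>
  hne <| HNNExtension.ReducedWord.toList_eq_nil_of_mem_of_range φ w ⟨x, h.symm⟩

lemma exists_word (x : HNNExtension G A B φ) : ∃ w : ReducedWord G A B, w.prod φ = x := by
  rcases NormalWord.TransversalPair.nonempty G A B with ⟨d⟩
  exact ⟨((NormalWord.equiv φ d) x).toReducedWord, (NormalWord.equiv φ d).symm_apply_apply x⟩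

lemma tpow_neg (u : ℤˣ) : (t ^ ((-u : ℤˣ) : ℤ) : HNNExtension G A B φ) = (t ^ (u : ℤ))⁻¹ := by
  rw [Units.val_neg, zpow_neg]

lemma tpow_mul_of {u : ℤˣ} {z : G} (hz : z ∈ toSubgroup A B u) :
    (t ^ (u : ℤ) : HNNExtension G A B φ) * of z
      = of ((toSubgroupEquiv φ u ⟨z, hz⟩ : G)) * t ^ (u : ℤ) := by
  rcases Int.units_eq_one_or u with rfl | rfl
  · rw [show ((1 : ℤˣ) : ℤ) = 1 from rfl, zpow_one]
    exact t_mul_of ⟨z, hz⟩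
  · rw [show ((-1 : ℤˣ) : ℤ) = -1 from rfl, zpow_neg_one]
    exact inv_t_mul_of ⟨z, hz⟩

lemma psi_mem {u : ℤˣ} {z : G} (hz : z ∈ toSubgroup A B u) :
    ((toSubgroupEquiv φ u ⟨z, hz⟩ : G)) ∈ toSubgroup A B (-u) := SetLike.coe_mem _

/-- move a `t` power right past an `of`, as right-assoc simp rule -/
lemma tpow_mul_of' {u : ℤˣ} {z : G} (hz : z ∈ toSubgroup A B u) (X : HNNExtension G A B φ) :
    (t ^ (u : ℤ) : HNNExtension G A B φ) * (of z * X)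
      = of ((toSubgroupEquiv φ u ⟨z, hz⟩ : G)) * (t ^ (u : ℤ) * X) := by
  rw [← mul_assoc, tpow_mul_of φ hz, mul_assoc]

lemma of_mul_tpow_inv {u : ℤˣ} {z : G} (hz : z ∈ toSubgroup A B u) :
    (of z : HNNExtension G A B φ) * (t ^ (u : ℤ))⁻¹
      = (t ^ (u : ℤ))⁻¹ * of ((toSubgroupEquiv φ u ⟨z, hz⟩ : G)) := by
  have h := tpow_mul_of φ hz
  calc (of z : HNNExtension G A B φ) * (t ^ (u : ℤ))⁻¹
      = (t ^ (u : ℤ))⁻¹ * (t ^ (u : ℤ) * of z) * (t ^ (u : ℤ))⁻¹ := by group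
    _ = (t ^ (u : ℤ))⁻¹ * (of ((toSubgroupEquiv φ u ⟨z, hz⟩ : G)) * t ^ (u : ℤ)) * (t ^ (u : ℤ))⁻¹ := by
          rw [h]
    _ = (t ^ (u : ℤ))⁻¹ * of ((toSubgroupEquiv φ u ⟨z, hz⟩ : G)) := by group

lemma of_mul_tpow_inv' {u : ℤˣ} {z : G} (hz : z ∈ toSubgroup A B u) (X : HNNExtension G A B φ) :
    (of z : HNNExtension G A B φ) * ((t ^ (u : ℤ))⁻¹ * X)
      = (t ^ (u : ℤ))⁻¹ * (of ((toSubgroupEquiv φ u ⟨z, hz⟩ : G)) * X) := by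
  rw [← mul_assoc, of_mul_tpow_inv φ hz, mul_assoc]

/-- cyclically reduced condition (in addition to being a reduced word): no pinch
around the wrap. -/
def Wr (V : ReducedWord G A B) : Prop :=
  ∀ x ∈ V.toList.getLast?, ∀ y ∈ V.toList.head?,
    x.2 * V.head ∈ toSubgroup A B x.1 → x.1 = y.1

lemma chain_replace_last {L : List (ℤˣ × G)} {v : ℤˣ} {m m' : G}
    (h : (L ++ [(v, m)]).IsChain (Cnd A B)) : (L ++ [(v, m')]).IsChain (Cnd A B) := by
  rw [isChain_append] at h ⊢
  refine ⟨h.1, isChain_singleton _, fun x hx y hy => ?_⟩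
  simp only [head?_cons, Option.mem_some_iff] at hy
  subst hy
  exact h.2.2 x hx (v, m) (by simp)

lemma head_fst_replace_last {L : List (ℤˣ × G)} {v : ℤˣ} {m m' : G} :
    ((L ++ [(v, m')]).head?).map Prod.fst = ((L ++ [(v, m)]).head?).map Prod.fst := by
  cases L <;> simp


lemma mem_some {α : Type*} {x a : α} (h : x ∈ some a) : x = a := by
  have h' : a = x := by simpa using h
  exact h'.symm

lemma op1 (g : G) (V : ReducedWord G A B) (hne : V.toList ≠ []) (hw : Wr V) :
    ∃ V' : ReducedWord G A B, V'.toList ≠ [] ∧ Wr V' ∧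
      V'.prod φ = of g * V.prod φ * (of g)⁻¹ := by
  obtain ⟨T, ⟨v, m⟩, hT⟩ := (List.eq_nil_or_concat' V.toList).resolve_left hne
  have hc : (T ++ [(v, m * g⁻¹)]).IsChain (Cnd A B) :=
    chain_replace_last (hT ▸ V.chain)
  refine ⟨mkW (g * V.head) (T ++ [(v, m * g⁻¹)]) hc, by simp, ?_, ?_⟩
  · intro x hx y hy
    simp only [mkW_toList, mkW_head] at hx hy ⊢
    rw [getLast?_concat] at hx
    have hx' : x = (v, m * g⁻¹) := mem_some hx
    subst hx'
    have hh : ((T ++ [(v, m * g⁻¹)]).head?).map Prod.fst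
        = (V.toList.head?).map Prod.fst := by
      rw [hT]; exact head_fst_replace_last
    have hy' : (V.toList.head?).map Prod.fst = some y.1 := by
      rw [← hh]
      cases hh2 : (T ++ [(v, m * g⁻¹)]).head? with
      | none => rw [hh2] at hy; simp at hy
      | some p => rw [hh2] at hy; simp at hy; subst hy; rfl
    obtain ⟨y₀, hy₀, hy₀fst⟩ : ∃ y₀, V.toList.head? = some y₀ ∧ y₀.1 = y.1 := by
      cases hh3 : V.toList.head? with
      | none => rw [hh3] at hy'; simp at hy'
      | some p => rw [hh3] at hy'; simp at hy'; exact ⟨p, rfl, hy'⟩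
    intro hmem
    have heq : (m * g⁻¹) * (g * V.head) = m * V.head := by group
    rw [heq] at hmem
    have := hw (v, m) (by rw [hT]; exact by rw [getLast?_concat]; rfl) y₀ (by rw [hy₀]; rfl) hmem
    simpa [hy₀fst] using this
  · rw [prod_eq, prod_eq, hT]
    simp [mul_assoc, map_mul, map_inv]

lemma op2 (u : ℤˣ) (V : ReducedWord G A B) (hne : V.toList ≠ []) (hw : Wr V) :
    (∃ V' : ReducedWord G A B, V'.toList ≠ [] ∧ Wr V' ∧
        V'.prod φ = t ^ (u : ℤ) * V.prod φ * (t ^ (u : ℤ))⁻¹) ∨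
    (∃ (W : ReducedWord G A B) (tl : List (ℤˣ × G)),
        W.head = 1 ∧ W.toList = (u, V.head) :: tl ∧ tl ≠ [] ∧
        tl.getLast? = some (-u, 1) ∧
        W.prod φ = t ^ (u : ℤ) * V.prod φ * (t ^ (u : ℤ))⁻¹) := by
  obtain ⟨⟨μ1, m1⟩, Lv', hcons⟩ := List.exists_cons_of_ne_nil hne
  obtain ⟨dl, ⟨μm, mm⟩, hconc⟩ := (List.eq_nil_or_concat' V.toList).resolve_left hne
  have hlast : V.toList.getLast? = some (μm, mm) := by rw [hconc, getLast?_concat]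
  have hhead : V.toList.head? = some (μ1, m1) := by rw [hcons]; rfl
  by_cases hp2 : μm = u ∧ mm ∈ toSubgroup A B μm
  · obtain ⟨rfl, hmm⟩ := hp2
    left
    have hβ : ((toSubgroupEquiv φ μm ⟨mm, hmm⟩ : G)) ∈ toSubgroup A B (-μm) := psi_mem φ hmm
    rcases List.eq_nil_or_concat' dl with rfl | ⟨dl', ⟨v, m⟩, rfl⟩
    · -- V.toList = [(μm, mm)]
      simp only [List.nil_append] at hconc
      refine ⟨mkW 1 [(μm, V.head * ((toSubgroupEquiv φ μm ⟨mm, hmm⟩ : G)))]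
        (isChain_singleton _), by simp, ?_, ?_⟩
      · intro x hx y hy
        simp only [mkW_toList] at hx hy
        have hx' : x = (μm, V.head * ((toSubgroupEquiv φ μm ⟨mm, hmm⟩ : G))) := mem_some hx
        have hy' : y = (μm, V.head * ((toSubgroupEquiv φ μm ⟨mm, hmm⟩ : G))) := mem_some hy
        subst hx'; subst hy'
        intro _; rfl
      · rw [prod_eq, prod_eq, hconc]
        simp [mul_assoc, of_mul_tpow_inv' φ hmm, of_mul_tpow_inv φ hmm, mul_inv_cancel_left]
    · -- dl = dl' ++ [(v, m)]
      have hdlhd : ((dl' ++ [(v, m)]).head?).map Prod.fst = some μ1 := by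
        have : ((dl' ++ [(v, m)]) ++ [(μm, mm)]).head? = some (μ1, m1) := by
          rw [← hconc]; exact hhead
        cases dl' with
        | nil =>
          obtain ⟨h0a, h0b⟩ : v = μ1 ∧ m = m1 := by simpa using this
          simp [h0a]
        | cons p l =>
          have h0 : p = (μ1, m1) := by simpa using this
          simp [h0]
      have hchain2 : (dl' ++ [(v, m * ((toSubgroupEquiv φ μm ⟨mm, hmm⟩ : G)))]).IsChain (Cnd A B) := by
        apply chain_replace_last (m := m)
        have hch := V.chain
        rw [hconc] at hch
        exact (isChain_append.1 hch).1
      have hcnd1 : ∀ y ∈ (dl' ++ [(v, m * ((toSubgroupEquiv φ μm ⟨mm, hmm⟩ : G)))]).head?,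
          Cnd A B (μm, V.head) y := by
        intro y hy
        have h1 : ((dl' ++ [(v, m * ((toSubgroupEquiv φ μm ⟨mm, hmm⟩ : G)))]).head?).map Prod.fst
            = some μ1 := by
          rw [head_fst_replace_last (m := m)]; exact hdlhd
        intro hmemv
        have hmul : mm * V.head ∈ toSubgroup A B μm := mul_mem hmm hmemv
        have hres := hw (μm, mm) (by rw [hlast]; rfl) (μ1, m1) (by rw [hhead]; rfl) hmul
        cases hy2 : (dl' ++ [(v, m * ((toSubgroupEquiv φ μm ⟨mm, hmm⟩ : G)))]).head? with
        | none => rw [hy2] at hy; simp at hy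
        | some p =>
          have hy3 : y = p := by rw [hy2] at hy; exact mem_some hy
          rw [hy2] at h1
          have h1' : p.1 = μ1 := by simpa using h1
          show μm = y.1
          rw [hy3, h1']
          exact hres
      refine ⟨mkW 1 ((μm, V.head) :: (dl' ++ [(v, m * ((toSubgroupEquiv φ μm ⟨mm, hmm⟩ : G)))]))
        (isChain_cons.2 ⟨hcnd1, hchain2⟩), by simp, ?_, ?_⟩
      · -- Wr
        intro x hx y hy
        simp only [mkW_toList, mkW_head] at hx hy ⊢
        have hx' : x = (v, m * ((toSubgroupEquiv φ μm ⟨mm, hmm⟩ : G))) := by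
          rw [show (μm, V.head) :: (dl' ++ [(v, m * ((toSubgroupEquiv φ μm ⟨mm, hmm⟩ : G)))])
            = ((μm, V.head) :: dl') ++ [(v, m * ((toSubgroupEquiv φ μm ⟨mm, hmm⟩ : G)))] from rfl,
            getLast?_concat] at hx
          exact mem_some hx
        have hy' : y = (μm, V.head) := mem_some hy
        subst hx'; subst hy'
        intro hmem
        rw [mul_one] at hmem
        rcases units_cases v μm with rfl | rfl
        · rfl
        · exfalso
          have hm' : m ∈ toSubgroup A B (-μm) := by
            have h5 : m * ((toSubgroupEquiv φ μm ⟨mm, hmm⟩ : G))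
                * ((toSubgroupEquiv φ μm ⟨mm, hmm⟩ : G))⁻¹ ∈ toSubgroup A B (-μm) :=
              mul_mem hmem (inv_mem hβ)
            simpa using h5
          have hch := V.chain
          rw [hconc] at hch
          have hjunc := (isChain_append.1 hch).2.2 (-μm, m)
            (by rw [getLast?_concat]; rfl) (μm, mm) (by rw [head?_cons]; rfl) hm'
          exact units_ne_neg μm hjunc.symm
      · rw [prod_eq, prod_eq, hconc]
        simp [mul_assoc, of_mul_tpow_inv φ hmm, mul_inv_cancel_left, map_mul]
  · by_cases hp1 : V.head ∈ toSubgroup A B u ∧ u = -μ1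
    · left
      obtain ⟨hvmem, hu⟩ := hp1
      have hμ1 : μ1 = -u := by rw [hu, neg_neg]
      subst hμ1
      have hα : ((toSubgroupEquiv φ u ⟨V.head, hvmem⟩ : G)) ∈ toSubgroup A B (-u) :=
        psi_mem φ hvmem
      have hch := V.chain
      rw [hcons] at hch
      have hcLv' : Lv'.IsChain (Cnd A B) := (isChain_cons.1 hch).2
      have hc : (Lv' ++ [(-u, (1 : G))]).IsChain (Cnd A B) := by
        refine isChain_append.2 ⟨hcLv', isChain_singleton _, fun x hx y hy => ?_⟩
        have hy' : y = (-u, (1:G)) := mem_some hy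
        subst hy'
        obtain ⟨l2, z, hl2⟩ := (List.eq_nil_or_concat' Lv').resolve_left
          (by rintro rfl; simp at hx)
        subst hl2
        rw [getLast?_concat] at hx
        have hx' : x = z := mem_some hx
        subst hx'
        have h6 : V.toList.getLast? = some x := by
          rw [hcons, show (-u, m1) :: (l2 ++ [x]) = ((-u, m1) :: l2) ++ [x] from rfl,
            getLast?_concat]
        have hzlast : x = (μm, mm) := by
          rw [h6] at hlast
          exact Option.some_inj.mp hlast
        subst hzlast
        intro hmem2
        rcases units_cases μm u with rfl | h7
        · exact absurd ⟨rfl, hmem2⟩ hp2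
        · exact h7
      refine ⟨mkW (((toSubgroupEquiv φ u ⟨V.head, hvmem⟩ : G)) * m1) (Lv' ++ [(-u, (1:G))]) hc,
        by simp, ?_, ?_⟩
      · -- Wr
        intro x hx y hy
        simp only [mkW_toList, mkW_head] at hx hy ⊢
        rw [getLast?_concat] at hx
        have hx' : x = (-u, (1:G)) := mem_some hx
        subst hx'
        intro hmem
        rw [one_mul] at hmem
        cases hLv' : Lv' with
        | nil =>
          subst hLv'
          have hy' : y = (-u, (1:G)) := mem_some hy
          subst hy'; rfl
        | cons p l3 =>
          subst hLv'
          have hy' : y = p := mem_some hy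
          subst hy'
          have hm1 : m1 ∈ toSubgroup A B (-u) := by
            have h8 : ((toSubgroupEquiv φ u ⟨V.head, hvmem⟩ : G))⁻¹
                * (((toSubgroupEquiv φ u ⟨V.head, hvmem⟩ : G)) * m1) ∈ toSubgroup A B (-u) :=
              mul_mem (inv_mem hα) hmem
            simpa using h8
          exact (isChain_cons_cons.1 hch).1 hm1
      · -- prod
        rw [prod_eq, prod_eq, hcons]
        simp [mul_assoc, tpow_neg, tpow_mul_of' φ hvmem, tpow_mul_of φ hvmem,
          inv_mul_cancel_left, mul_inv_cancel_left, map_mul]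
    · right
      have hc : ((u, V.head) :: (V.toList ++ [(-u, (1:G))])).IsChain (Cnd A B) := by
        refine isChain_cons.2 ⟨?_, isChain_append.2 ⟨V.chain, isChain_singleton _, ?_⟩⟩
        · intro y hy
          have hy' : y = (μ1, m1) := by
            rw [hcons] at hy; exact mem_some hy
          subst hy'
          intro hmem
          rcases units_cases u μ1 with rfl | h
          · rfl
          · exact absurd ⟨hmem, h⟩ hp1
        · intro x hx y hy
          have hy' : y = (-u, (1:G)) := mem_some hy
          subst hy'
          rw [hlast] at hx
          have hx' : x = (μm, mm) := mem_some hx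
          subst hx'
          intro hmem
          rcases units_cases μm u with rfl | h
          · exact absurd ⟨rfl, hmem⟩ hp2
          · exact h
      refine ⟨mkW 1 ((u, V.head) :: (V.toList ++ [(-u, (1:G))])) hc,
        V.toList ++ [(-u, (1:G))], rfl, rfl, by simp, by rw [getLast?_concat], ?_⟩
      rw [prod_eq, prod_eq]
      simp [mul_assoc, tpow_neg]

/-- Mode 1: the conjugate is a base element, with proper-power propagation. -/
def M1 (P : Prop) (X : HNNExtension G A B φ) : Prop :=
  ∃ q : G, X = of q ∧ (P → IsProperPower q)

/-- Mode 2: the conjugate is the product of a nonempty cyclically reduced word. -/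
def M2 (X : HNNExtension G A B φ) : Prop :=
  ∃ V : ReducedWord G A B, V.toList ≠ [] ∧ Wr V ∧ X = V.prod φ

/-- Mode 3: the conjugate is the product of a reduced word of a special shape. -/
def M3 (g : G) (L : List (ℤˣ × G)) (X : HNNExtension G A B φ) : Prop :=
  ∃ (W : ReducedWord G A B) (u : ℤˣ) (c₁ : G) (tl : List (ℤˣ × G)),
    X = W.prod φ ∧ W.head = g ∧ W.toList = (u, c₁) :: tl ∧ tl ≠ [] ∧
    tl.getLast? = some (-u, g⁻¹) ∧ L.head?.map Prod.fst = some u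

lemma M3_nonempty {g : G} {L : List (ℤˣ × G)} {X : HNNExtension G A B φ}
    (h : M3 φ g L X) : ∃ W : ReducedWord G A B, W.toList ≠ [] ∧ X = W.prod φ := by
  obtain ⟨W, u, c₁, tl, hX, _, hlist, _, _, _⟩ := h
  exact ⟨W, by rw [hlist]; simp, hX⟩

lemma M3step {u : ℤˣ} {g' : G} {L' : List (ℤˣ × G)}
    (hcond : ∀ p ∈ L'.head?, Cnd A B (u, g') p) (g : G) {X : HNNExtension G A B φ}
    (h : M3 φ g' L' X) :
    M3 φ g ((u, g') :: L') ((of g * t ^ (u : ℤ)) * X * (of g * t ^ (u : ℤ))⁻¹) := by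
  obtain ⟨W', u₂, c₁, tl, hX, hhd, hlist, htlne, hlast, hLhd⟩ := h
  obtain ⟨p, hp, hpfst⟩ : ∃ p, L'.head? = some p ∧ p.1 = u₂ := by
    cases hL' : L'.head? with
    | none => rw [hL'] at hLhd; simp at hLhd
    | some p => rw [hL'] at hLhd; simp only [Option.map_some] at hLhd
                exact ⟨p, rfl, by simpa using hLhd⟩
  have hcnd : g' ∈ toSubgroup A B u → u = u₂ := fun hm => by
    have := hcond p (by rw [hp]; rfl) hm
    rwa [hpfst] at this
  have hjunc : ∀ x ∈ W'.toList.getLast?, Cnd A B x (-u, g⁻¹) := by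
    intro x hx
    obtain ⟨tl0, z, hz⟩ := (List.eq_nil_or_concat' tl).resolve_left htlne
    subst hz
    rw [getLast?_concat] at hlast
    have hzeq : z = (-u₂, g'⁻¹) := Option.some_inj.mp hlast
    subst hzeq
    rw [hlist, show (u₂, c₁) :: (tl0 ++ [(-u₂, g'⁻¹)]) = ((u₂, c₁) :: tl0) ++ [(-u₂, g'⁻¹)]
      from rfl, getLast?_concat] at hx
    have hx' : x = (-u₂, g'⁻¹) := mem_some hx
    subst hx'
    intro hm
    have hm' : g' ∈ toSubgroup A B (-u₂) := by simpa using hm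
    show -u₂ = -u
    rcases units_cases u u₂ with rfl | h8
    · rfl
    · exfalso
      have hg' : g' ∈ toSubgroup A B u := by rw [h8]; exact hm'
      apply units_ne_neg u₂
      nth_rewrite 1 [← hcnd hg']
      exact h8
  have hc : ((u, g') :: (W'.toList ++ [(-u, g⁻¹)])).IsChain (Cnd A B) := by
    refine isChain_cons.2 ⟨?_, isChain_append.2 ⟨W'.chain, isChain_singleton _, ?_⟩⟩
    · intro y hy
      rw [hlist] at hy
      have hy' : y = (u₂, c₁) := mem_some hy
      subst hy'
      exact hcnd
    · intro x hx y hy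
      have hy' : y = (-u, g⁻¹) := mem_some hy
      subst hy'
      exact hjunc x hx
  refine ⟨mkW g ((u, g') :: (W'.toList ++ [(-u, g⁻¹)])) hc, u, g',
    W'.toList ++ [(-u, g⁻¹)], ?_, rfl, rfl, by simp, by rw [getLast?_concat], by simp⟩
  rw [hX, prod_eq, prod_eq, hhd]
  simp [mul_assoc, tpow_neg, map_mul, map_inv, mul_inv_rev]

lemma U1 {P : Prop}
    (hstep : ∀ (u : ℤˣ) (q : G) (hq : q ∈ toSubgroup A B u),
        IsProperPower q → IsProperPower ((toSubgroupEquiv φ u ⟨q, hq⟩ : G))) :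
    ∀ (L : List (ℤˣ × G)) (g : G), L.IsChain (Cnd A B) →
      ∀ Z : HNNExtension G A B φ, M1 φ P Z →
      M1 φ P ((of g * lact φ L) * Z * (of g * lact φ L)⁻¹) ∨
      M3 φ g L ((of g * lact φ L) * Z * (of g * lact φ L)⁻¹) := by
  intro L
  induction L with
  | nil =>
    intro g hL Z hZ
    obtain ⟨q, rfl, himp⟩ := hZ
    left
    refine ⟨g * q * g⁻¹, ?_, fun hp => pp_conj g (himp hp)⟩
    simp [mul_assoc]
  | cons p L' ih =>
    obtain ⟨u, g'⟩ := p
    intro g hL Z hZ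
    have hCeq : (of g * lact φ ((u, g') :: L')) * Z * (of g * lact φ ((u, g') :: L'))⁻¹
        = (of g * t ^ (u : ℤ)) * ((of g' * lact φ L') * Z * (of g' * lact φ L')⁻¹)
          * (of g * t ^ (u : ℤ))⁻¹ := by
      simp [mul_assoc, mul_inv_rev]
    rcases ih g' (isChain_cons.1 hL).2 Z hZ with ⟨q, hq, himp⟩ | h3
    · by_cases hmem : q ∈ toSubgroup A B u
      · left
        refine ⟨g * ((toSubgroupEquiv φ u ⟨q, hmem⟩ : G)) * g⁻¹, ?_,
          fun hp => pp_conj g (hstep u q hmem (himp hp))⟩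
        rw [hCeq, hq]
        simp [mul_assoc, mul_inv_rev, tpow_mul_of' φ hmem, tpow_mul_of φ hmem,
          mul_inv_cancel_left, map_mul, map_inv]
      · right
        have hc : ([(u, q), (-u, g⁻¹)] : List (ℤˣ × G)).IsChain (Cnd A B) :=
          isChain_cons_cons.2 ⟨fun hm => absurd hm hmem, isChain_singleton _⟩
        refine ⟨mkW g [(u, q), (-u, g⁻¹)] hc, u, q, [(-u, g⁻¹)], ?_, rfl, rfl, by simp,
          by simp, rfl⟩
        rw [hCeq, hq, prod_eq]
        simp [mul_assoc, tpow_neg, map_mul, map_inv, mul_inv_rev]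
    · right
      rw [hCeq]
      exact M3step φ (fun p hp => (isChain_cons.1 hL).1 p hp) g h3

lemma U2 :
    ∀ (L : List (ℤˣ × G)) (g : G), L.IsChain (Cnd A B) →
      ∀ Z : HNNExtension G A B φ, M2 φ Z →
      M2 φ ((of g * lact φ L) * Z * (of g * lact φ L)⁻¹) ∨
      M3 φ g L ((of g * lact φ L) * Z * (of g * lact φ L)⁻¹) := by
  intro L
  induction L with
  | nil =>
    intro g hL Z hZ
    obtain ⟨V, hne, hwr, rfl⟩ := hZ
    obtain ⟨V', hne', hwr', hprod'⟩ := op1 φ g V hne hwr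
    left
    exact ⟨V', hne', hwr', by rw [hprod']; simp [mul_assoc]⟩
  | cons p L' ih =>
    obtain ⟨u, g'⟩ := p
    intro g hL Z hZ
    have hCeq : (of g * lact φ ((u, g') :: L')) * Z * (of g * lact φ ((u, g') :: L'))⁻¹
        = (of g * t ^ (u : ℤ)) * ((of g' * lact φ L') * Z * (of g' * lact φ L')⁻¹)
          * (of g * t ^ (u : ℤ))⁻¹ := by
      simp [mul_assoc, mul_inv_rev]
    rcases ih g' (isChain_cons.1 hL).2 Z hZ with h2 | h3
    · obtain ⟨V, hne, hwr, hC'⟩ := h2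
      rcases op2 φ u V hne hwr with ⟨V₂, hne₂, hwr₂, hprod₂⟩ | ⟨W₀, tl, hW0hd, hW0list, htlne, htllast, hW0prod⟩
      · obtain ⟨V₃, hne₃, hwr₃, hprod₃⟩ := op1 φ g V₂ hne₂ hwr₂
        left
        refine ⟨V₃, hne₃, hwr₃, ?_⟩
        rw [hCeq, hC', hprod₃, hprod₂]
        simp [mul_assoc, mul_inv_rev]
      · right
        obtain ⟨tl0, z, hz⟩ := (List.eq_nil_or_concat' tl).resolve_left htlne
        subst hz
        rw [getLast?_concat] at htllast
        have hzeq : z = (-u, (1 : G)) := Option.some_inj.mp htllast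
        subst hzeq
        have hc : ((u, V.head) :: (tl0 ++ [(-u, g⁻¹)])).IsChain (Cnd A B) := by
          have hch := W₀.chain
          rw [hW0list] at hch
          have h1 := (isChain_cons.1 hch).1
          have h2 := chain_replace_last (m := (1 : G)) (m' := g⁻¹) (isChain_cons.1 hch).2
          refine isChain_cons.2 ⟨?_, h2⟩
          intro y hy
          cases tl0 with
          | nil =>
            have hy' : y = (-u, g⁻¹) := mem_some hy
            subst hy'
            exact fun hm => h1 (-u, (1 : G)) rfl hm
          | cons p l =>
            have hy' : y = p := mem_some hy
            intro hm
            rw [hy']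
            exact h1 p rfl hm
        refine ⟨mkW g ((u, V.head) :: (tl0 ++ [(-u, g⁻¹)])) hc, u, V.head,
          tl0 ++ [(-u, g⁻¹)], ?_, rfl, rfl, by simp, by rw [getLast?_concat], rfl⟩
        have hW : of (1:G) * lact φ ((u, V.head) :: (tl0 ++ [(-u, (1:G))]))
            = t ^ (u : ℤ) * V.prod φ * (t ^ (u : ℤ))⁻¹ := by
          rw [← hW0prod, prod_eq, hW0hd, hW0list]
        have hmid : (of g * t ^ (u : ℤ)) * V.prod φ * (of g * t ^ (u : ℤ))⁻¹
            = of g * (of (1:G) * lact φ ((u, V.head) :: (tl0 ++ [(-u, (1:G))]))) * (of g)⁻¹ := by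
          rw [hW]; simp [mul_assoc, mul_inv_rev]
        rw [hCeq, hC', hmid]
        simp [prod_eq, mul_assoc, map_inv, mul_inv_rev]
    · right
      rw [hCeq]
      exact M3step φ (fun p hp => (isChain_cons.1 hL).1 p hp) g h3

lemma pow_succ_conj {M : Type*} [Monoid M] (x y : M) :
    ∀ j : ℕ, (x * y) ^ (j + 1) = x * (y * x) ^ j * y
  | 0 => by simp
  | j + 1 => by
    rw [pow_succ (x * y), pow_succ_conj x y j, pow_succ (y * x)]
    simp [mul_assoc]

lemma pwr (w : ReducedWord G A B) (u1 : ℤˣ) (g1 : G) (rest dl : List (ℤˣ × G))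
    (uN : ℤˣ) (gN : G)
    (h1 : w.toList = (u1, g1) :: rest) (h2 : w.toList = dl ++ [(uN, gN)])
    (hnp : gN * w.head ∈ toSubgroup A B uN → uN = u1) (j : ℕ) :
    ∃ V : ReducedWord G A B, V.toList ≠ [] ∧ Wr V ∧ V.prod φ = (w.prod φ) ^ (j + 1) := by
  set M : List (ℤˣ × G) := dl ++ [(uN, gN * w.head)] with hM
  have hMne : M ≠ [] := by simp [hM]
  have hMhd : M.head?.map Prod.fst = some u1 := by
    rcases dl with _ | ⟨p, dl'⟩
    · have h3 : (u1, g1) :: rest = [(uN, gN)] := by rw [← h1, h2]; rfl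
      have h4 : u1 = uN := by
        have h5 := congrArg (fun l => l.head?.map Prod.fst) h3
        simpa using h5
      simp [hM, ← h4]
    · have h3 : (u1, g1) :: rest = p :: (dl' ++ [(uN, gN)]) := by rw [← h1, h2]; rfl
      have h4 : p = (u1, g1) := by
        have h5 := congrArg (fun l => l.head?) h3
        simpa using h5.symm
      simp [hM, h4]
  have hchM : M.IsChain (Cnd A B) := by
    apply chain_replace_last (m := gN)
    rw [← h2]; exact w.chain
  have hlactM : lact φ M = lact φ w.toList * of w.head := by
    rw [hM, h2]; simp [mul_assoc]
  have key : ∀ i : ℕ, ((List.replicate i M).flatten ++ w.toList).IsChain (Cnd A B) ∧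
      ((List.replicate i M).flatten ++ w.toList).head?.map Prod.fst = some u1 ∧
      of w.head * lact φ ((List.replicate i M).flatten ++ w.toList) = (w.prod φ) ^ (i + 1) := by
    intro i
    induction i with
    | zero =>
      refine ⟨by simpa using chain_of_word w, by rw [h1]; simp, ?_⟩
      rw [show (List.replicate 0 M).flatten ++ w.toList = w.toList by simp, ← prod_eq, pow_one]
    | succ i ihh =>
      obtain ⟨ihc, ihh2, ihp⟩ := ihh
      have hflat : (List.replicate (i + 1) M).flatten = M ++ (List.replicate i M).flatten := by
        rw [List.replicate_succ, List.flatten_cons]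
      refine ⟨?_, ?_, ?_⟩
      · rw [hflat, List.append_assoc]
        refine isChain_append.2 ⟨hchM, ihc, ?_⟩
        intro x hx y hy
        have hx' : x = (uN, gN * w.head) := by
          rw [hM, getLast?_concat] at hx; exact mem_some hx
        subst hx'
        intro hm
        have h6 := hnp hm
        cases hh : ((List.replicate i M).flatten ++ w.toList).head? with
        | none => rw [hh] at hy; simp at hy
        | some p =>
          have hy' : y = p := by rw [hh] at hy; exact mem_some hy
          rw [hh] at ihh2
          have h7 : p.1 = u1 := by simpa using ihh2
          show uN = y.1
          rw [hy', h7]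
          exact h6
      · rw [hflat, List.append_assoc, List.head?_append_of_ne_nil _ hMne]
        exact hMhd
      · rw [hflat, List.append_assoc, lact_append, hlactM]
        calc of w.head * (lact φ w.toList * of w.head
              * lact φ ((List.replicate i M).flatten ++ w.toList))
            = (of w.head * lact φ w.toList)
              * (of w.head * lact φ ((List.replicate i M).flatten ++ w.toList)) := by
              simp [mul_assoc]
          _ = w.prod φ * (w.prod φ) ^ (i + 1) := by rw [← prod_eq, ihp]
          _ = (w.prod φ) ^ (i + 1 + 1) := (pow_succ' _ _).symm
  obtain ⟨hc, hhd, hp⟩ := key j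
  refine ⟨mkW w.head ((List.replicate j M).flatten ++ w.toList) hc, by simp [h1], ?_, hp⟩
  intro x hx y hy
  simp only [mkW_toList, mkW_head] at hx hy ⊢
  rw [List.getLast?_append_of_ne_nil _ (by rw [h1]; simp), h2, getLast?_concat] at hx
  have hx' : x = (uN, gN) := mem_some hx
  subst hx'
  intro hm
  have h6 := hnp hm
  cases hh : ((List.replicate j M).flatten ++ w.toList).head? with
  | none => rw [hh] at hy; simp at hy
  | some p =>
    have hy' : y = p := by rw [hh] at hy; exact mem_some hy
    rw [hh] at hhd
    have h7 : p.1 = u1 := by simpa using hhd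
    show uN = y.1
    rw [hy', h7]
    exact h6

lemma britton_route (c : HNNExtension G A B φ) (x : G) (Z : HNNExtension G A B φ)
    (heq : of x = c * Z * c⁻¹) (hZ : M2 φ Z) : False := by
  obtain ⟨wc, hwc⟩ := exists_word φ c
  have hCx : (of wc.head * lact φ wc.toList) * Z * (of wc.head * lact φ wc.toList)⁻¹ = of x := by
    rw [← prod_eq, hwc, ← heq]
  rcases U2 φ wc.toList wc.head wc.chain Z hZ with h2 | h3
  · obtain ⟨V', hne', _, hCV⟩ := h2
    exact britton φ V' hne' x (by rw [← hCV, hCx])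
  · obtain ⟨W, hne, hCW⟩ := M3_nonempty φ h3
    exact britton φ W hne x (by rw [← hCW, hCx])

lemma main
    (hstep : ∀ (u : ℤˣ) (q : G) (hq : q ∈ toSubgroup A B u),
        IsProperPower q → IsProperPower ((toSubgroupEquiv φ u ⟨q, hq⟩ : G)))
    (k : ℕ) (hk : 2 ≤ k) :
    ∀ n : ℕ, ∀ w : ReducedWord G A B, w.toList.length = n →
      ∀ (c : HNNExtension G A B φ) (x : G),
        of x = c * (w.prod φ) ^ k * c⁻¹ → ¬ IsProperPower x → False := by
  intro n
  induction n using Nat.strong_induction_on with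
  | _ n ihn =>
  intro w hlen c x heq hx
  rcases hl : w.toList with _ | ⟨⟨u1, g1⟩, rest⟩
  · -- base case : w.prod = of w.head
    have hpk : (w.prod φ) ^ k = of (w.head ^ k) := by
      rw [prod_eq, hl, lact_nil, mul_one, ← map_pow]
    obtain ⟨wc, hwc⟩ := exists_word φ c
    have hCx : (of wc.head * lact φ wc.toList) * ((w.prod φ) ^ k)
        * (of wc.head * lact φ wc.toList)⁻¹ = of x := by
      rw [← prod_eq, hwc, ← heq]
    rcases U1 φ (P := True) hstep wc.toList wc.head wc.chain ((w.prod φ) ^ k)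
        ⟨w.head ^ k, hpk, fun _ => pp_pow w.head hk⟩ with ⟨q, hq, himp⟩ | h3
    · apply hx
      have hofeq : (of x : HNNExtension G A B φ) = of q := by rw [← hCx, hq]
      have hxq : x = q := HNNExtension.of_injective (φ := φ) hofeq
      rw [hxq]
      exact himp trivial
    · obtain ⟨W, hne, hCW⟩ := M3_nonempty φ h3
      exact britton φ W hne x (by rw [← hCW, hCx])
  · rcases List.eq_nil_or_concat' rest with rfl | ⟨mid, ⟨uN, gN⟩, hrest⟩
    · -- length one : always cyclically reduced
      obtain ⟨V, hVne, hVwr, hVp⟩ := pwr φ w u1 g1 [] [] u1 g1 hl (by simpa using hl)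
        (fun _ => rfl) (k - 1)
      have hVk : V.prod φ = (w.prod φ) ^ k := by rw [hVp]; congr 1; omega
      exact britton_route φ c x ((w.prod φ) ^ k) heq ⟨V, hVne, hVwr, hVk.symm⟩
    · subst hrest
      by_cases hnp : gN * w.head ∈ toSubgroup A B uN → uN = u1
      · obtain ⟨V, hVne, hVwr, hVp⟩ := pwr φ w u1 g1 (mid ++ [(uN, gN)]) ((u1, g1) :: mid)
          uN gN hl (by rw [hl]; rfl) hnp (k - 1)
        have hVk : V.prod φ = (w.prod φ) ^ k := by rw [hVp]; congr 1; omega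
        exact britton_route φ c x ((w.prod φ) ^ k) heq ⟨V, hVne, hVwr, hVk.symm⟩
      · push_neg at hnp
        obtain ⟨hβmem, hne1⟩ := hnp
        have hu1 : u1 = -uN := by
          rcases units_cases u1 uN with rfl | h
          · exact absurd rfl hne1
          · exact h
        subst hu1
        have hmv : ∀ X : HNNExtension G A B φ,
            of gN * (of w.head * ((t ^ (uN : ℤ))⁻¹ * X))
              = (t ^ (uN : ℤ))⁻¹ * (of ((toSubgroupEquiv φ uN ⟨gN * w.head, hβmem⟩ : G)) * X) := by
          intro X
          rw [← mul_assoc, ← map_mul, of_mul_tpow_inv' φ hβmem X]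
        have hmv2 : of gN * (of w.head * ((t : HNNExtension G A B φ) ^ (uN : ℤ))⁻¹)
            = ((t : HNNExtension G A B φ) ^ (uN : ℤ))⁻¹
              * of ((toSubgroupEquiv φ uN ⟨gN * w.head, hβmem⟩ : G)) := by
          rw [← mul_assoc, ← map_mul, of_mul_tpow_inv φ hβmem]
        have hrec : ∀ w' : ReducedWord G A B, w'.toList.length + 2 = n →
            w'.prod φ = (t ^ (uN : ℤ) * (of w.head)⁻¹) * w.prod φ
              * (t ^ (uN : ℤ) * (of w.head)⁻¹)⁻¹ → False := by
          intro w' hlen' hprod'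
          have heq' : of x = (c * (t ^ (uN : ℤ) * (of w.head)⁻¹)⁻¹) * (w'.prod φ) ^ k
              * (c * (t ^ (uN : ℤ) * (of w.head)⁻¹)⁻¹)⁻¹ := by
            rw [hprod', conj_pow, heq]
            simp [mul_assoc, mul_inv_rev, inv_inv, mul_inv_cancel_left, inv_mul_cancel_left]
          exact ihn w'.toList.length (by omega) w' rfl _ x heq' hx
        rcases List.eq_nil_or_concat' mid with rfl | ⟨T, ⟨v, m⟩, hmid⟩
        · -- mid = [] : w' has empty word
          refine hrec (mkW (g1 * ((toSubgroupEquiv φ uN ⟨gN * w.head, hβmem⟩ : G))) []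
            List.isChain_nil) ?_ ?_
          · rw [← hlen, hl]; simp
          · rw [prod_eq, prod_eq, hl]
            simp only [mkW_head, mkW_toList, lact_nil, lact_cons, lact_append, mul_one,
              map_mul, mul_inv_rev, inv_inv, tpow_neg, List.nil_append]
            simp [mul_assoc, hmv, hmv2, inv_mul_cancel_left, mul_inv_cancel_left]
        · subst hmid
          have hch := w.chain
          rw [hl] at hch
          have hc' : (T ++ [(v, m * ((toSubgroupEquiv φ uN ⟨gN * w.head, hβmem⟩ : G)))]).IsChain
              (Cnd A B) := by
            apply chain_replace_last (m := m)
            have h9 := (isChain_cons.1 hch).2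
            rw [show (T ++ [(v, m)]) ++ [(uN, gN)]
              = T ++ [(v, m)] ++ [(uN, gN)] from rfl] at h9
            exact (isChain_append.1 h9).1
          refine hrec (mkW g1
            (T ++ [(v, m * ((toSubgroupEquiv φ uN ⟨gN * w.head, hβmem⟩ : G)))]) hc') ?_ ?_
          · rw [← hlen, hl]; simp
          · rw [prod_eq, prod_eq, hl]
            simp only [mkW_head, mkW_toList, lact_cons, lact_append, lact_nil, mul_one,
              map_mul, mul_inv_rev, inv_inv, tpow_neg]
            simp [mul_assoc, hmv, hmv2, inv_mul_cancel_left, mul_inv_cancel_left]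

end HNN

section Final

variable {G : Type*} [Group G]

lemma pp_gen {x : G} (y : G) (hxp : ¬ IsProperPower x) {j : ℤ}
    (hq : IsProperPower (x ^ j)) : IsProperPower (y ^ j) := by
  by_cases h0 : j = 0
  · subst h0; simpa using pp_one
  by_cases h1 : j = 1
  · exfalso; apply hxp; rwa [h1, zpow_one] at hq
  by_cases hm1 : j = -1
  · exfalso; apply hxp
    rw [hm1, zpow_neg_one] at hq
    have h2 := pp_inv hq; rwa [inv_inv] at h2
  · exact pp_zpow (by omega)

lemma step_zpowers (a b : G) (hap : ¬ IsProperPower a) (hbp : ¬ IsProperPower b)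
    (φ : (Subgroup.zpowers a) ≃* (Subgroup.zpowers b))
    (hφ : ((φ ⟨a, Subgroup.mem_zpowers a⟩ : Subgroup.zpowers b) : G) = b) :
    ∀ (u : ℤˣ) (q : G)
      (hq : q ∈ toSubgroup (Subgroup.zpowers a) (Subgroup.zpowers b) u),
      IsProperPower q →
      IsProperPower ((toSubgroupEquiv φ u ⟨q, hq⟩ : G)) := by
  have hφab : φ ⟨a, Subgroup.mem_zpowers a⟩ = ⟨b, Subgroup.mem_zpowers b⟩ := Subtype.ext hφ
  intro u q hq hpq
  rcases Int.units_eq_one_or u with rfl | rfl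
  · obtain ⟨j, hj⟩ := Subgroup.mem_zpowers_iff.mp (hq : q ∈ Subgroup.zpowers a)
    have himg : ((toSubgroupEquiv φ 1 ⟨q, hq⟩ : G)) = b ^ j := by
      have h1 : ((toSubgroupEquiv φ 1 ⟨q, hq⟩ : G))
          = ((φ ⟨q, hq⟩ : Subgroup.zpowers b) : G) := rfl
      rw [h1, show (⟨q, hq⟩ : Subgroup.zpowers a)
          = ⟨a, Subgroup.mem_zpowers a⟩ ^ j from Subtype.ext (by simp [hj]),
        map_zpow, hφab]
      simp
    rw [himg]
    exact pp_gen b hap (by rwa [hj])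
  · obtain ⟨j, hj⟩ := Subgroup.mem_zpowers_iff.mp (hq : q ∈ Subgroup.zpowers b)
    have hsymm : φ.symm ⟨b, Subgroup.mem_zpowers b⟩ = ⟨a, Subgroup.mem_zpowers a⟩ := by
      rw [← hφab, MulEquiv.symm_apply_apply]
    have himg : ((toSubgroupEquiv φ (-1) ⟨q, hq⟩ : G)) = a ^ j := by
      have h1 : ((toSubgroupEquiv φ (-1) ⟨q, hq⟩ : G))
          = ((φ.symm ⟨q, hq⟩ : Subgroup.zpowers a) : G) := rfl
      rw [h1, show (⟨q, hq⟩ : Subgroup.zpowers b)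
          = ⟨b, Subgroup.mem_zpowers b⟩ ^ j from Subtype.ext (by simp [hj]),
        map_zpow, hsymm]
      simp
    rw [himg]
    exact pp_gen a hbp (by rwa [hj])

end Final

end Stmt8Aux

theorem stmt8 {G : Type*} [Group G] (a b : G)
    (ha : ¬ IsOfFinOrder a) (hb : ¬ IsOfFinOrder b)
    (hap : ¬ IsProperPower a) (hbp : ¬ IsProperPower b)
    (φ : (Subgroup.zpowers a) ≃* (Subgroup.zpowers b))
    (hφ : ((φ ⟨a, Subgroup.mem_zpowers a⟩ : Subgroup.zpowers b) : G) = b)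
    (g₀ : G) (hg₀ : ¬ IsProperPower g₀) :
    ¬ IsProperPower
      (HNNExtension.of g₀ : HNNExtension G (Subgroup.zpowers a) (Subgroup.zpowers b) φ) := by
  intro hpp
  obtain ⟨h, k, hk, hEq⟩ := hpp
  obtain ⟨w, hw⟩ := Stmt8Aux.exists_word φ h
  have heq : (HNNExtension.of g₀ :
        HNNExtension G (Subgroup.zpowers a) (Subgroup.zpowers b) φ)
      = 1 * (w.prod φ) ^ k * 1⁻¹ := by
    rw [hw, ← hEq]; simp
  exact Stmt8Aux.main φ (Stmt8Aux.step_zpowers a b hap hbp φ hφ) k hk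
    w.toList.length w rfl 1 g₀ heq hg₀
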